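/- arXiv:0907.5132 — 4 statements merged into one kernel-verified Lean document; each statement's English description precedes it below -/
import Mathlib

section
/- For the homomorphism h with h(A)=ABB, h(B)=BBA, h(C)=h(D)=BAB: for all w₁ ∈ {A,C}* and w₂ ∈ {B,D}*, if h(w₁) = h(w₂)^R (the reversal of h(w₂)), then w₁w₂ derives the empty string using only the rules AB→λ and CD→λ. -/
inductive L4 where | A | B | C | D deriving DecidableEq

open L4

/-- Letter images of the homomorphism h: h(A)=ABB, h(B)=BBA, h(C)=h(D)=BAB. -/
def himg : L4 → List L4
  | A => [A, B, B]
  | B => [B, B, A]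
  | C => [B, A, B]
  | D => [B, A, B]

/-- The monoid homomorphism h on {A,B,C,D}* determined by the letter images. -/
def h (w : List L4) : List L4 := w.flatMap himg

/-- One deletion step by the rules AB→λ or CD→λ: delete an adjacent factor AB or CD. -/
def DelStep (u v : List L4) : Prop :=
  ∃ x y : List L4, (u = x ++ [A, B] ++ y ∨ u = x ++ [C, D] ++ y) ∧ v = x ++ y

def f : L4 → L4
  | A => B
  | C => D
  | B => A
  | D => C

lemma delstep_context {u v : List L4} (x y : List L4) (hs : DelStep u v) :
    DelStep (x ++ u ++ y) (x ++ v ++ y) := by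
  obtain ⟨a, b, hu, hv⟩ := hs
  refine ⟨x ++ a, b ++ y, ?_, by simp [hv]⟩
  rcases hu with hu | hu
  · left; simp [hu]
  · right; simp [hu]

lemma rtg_context {u v : List L4} (x y : List L4)
    (hs : Relation.ReflTransGen DelStep u v) :
    Relation.ReflTransGen DelStep (x ++ u ++ y) (x ++ v ++ y) := by
  induction hs with
  | refl => exact .refl
  | tail _ hstep ih => exact ih.tail (delstep_context x y hstep)

lemma h_inj_BD : ∀ u v : List L4, (∀ c ∈ u, c = B ∨ c = D) → (∀ c ∈ v, c = B ∨ c = D) →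
    h u = h v → u = v := by
  intro u
  induction u with
  | nil =>
    intro v _ hv heq
    cases v with
    | nil => rfl
    | cons c t =>
      rcases hv c (by simp) with rfl | rfl <;> simp [h, himg] at heq
  | cons b t ih =>
    intro v hu hv heq
    cases v with
    | nil =>
      rcases hu b (by simp) with rfl | rfl <;> simp [h, himg] at heq
    | cons b' t' =>
      rcases hu b (by simp) with rfl | rfl <;>
        rcases hv b' (by simp) with rfl | rfl <;>
          simp [h, himg] at heq <;>
            rw [ih t' (fun c hc => hu c (by simp [hc])) (fun c hc => hv c (by simp [hc]))
              (by simpa [h] using heq)]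

lemma h_rev (w : List L4) (hw : ∀ c ∈ w, c = A ∨ c = C) :
    (h w).reverse = h (w.reverse.map f) := by
  induction w with
  | nil => simp [h]
  | cons c t ih =>
    have ht := ih (fun x hx => hw x (by simp [hx]))
    rcases hw c (by simp) with rfl | rfl <;>
      simp [h, himg, f] at * <;> simp [ht]

lemma reduce_pair (u : List L4) (hu : ∀ c ∈ u, c = A ∨ c = C) :
    Relation.ReflTransGen DelStep (u ++ (u.reverse.map f)) [] := by
  induction u with
  | nil => simpa using Relation.ReflTransGen.refl
  | cons c t ih =>
    have ht := ih (fun x hx => hu x (by simp [hx]))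
    have h1 : Relation.ReflTransGen DelStep
        ([c] ++ (t ++ t.reverse.map f) ++ [f c]) ([c] ++ [] ++ [f c]) :=
      rtg_context [c] [f c] ht
    have heq : (c :: t) ++ ((c :: t).reverse.map f)
        = [c] ++ (t ++ t.reverse.map f) ++ [f c] := by simp
    have h2 : DelStep [c, f c] [] := by
      rcases hu c (by simp) with rfl | rfl
      · exact ⟨[], [], Or.inl rfl, rfl⟩
      · exact ⟨[], [], Or.inr rfl, rfl⟩
    rw [heq]
    exact (h1.tail (by simpa using h2))

/-- If w₁ ∈ {A,C}*, w₂ ∈ {B,D}*, and h(w₁) equals the reversal of h(w₂), then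
w₁w₂ derives the empty string using only the rules AB→λ and CD→λ. -/
theorem cancellation_of_mirror (w₁ w₂ : List L4)
    (h₁ : ∀ c ∈ w₁, c = A ∨ c = C) (h₂ : ∀ c ∈ w₂, c = B ∨ c = D)
    (hrev : h w₁ = (h w₂).reverse) :
    Relation.ReflTransGen DelStep (w₁ ++ w₂) [] := by
  have hBD : ∀ c ∈ w₁.reverse.map f, c = B ∨ c = D := by
    intro c hc
    simp only [List.mem_map, List.mem_reverse] at hc
    obtain ⟨a, ha, rfl⟩ := hc
    rcases h₁ a ha with rfl | rfl
    · left; rfl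
    · right; rfl
  have hw2 : w₂ = w₁.reverse.map f := by
    refine (h_inj_BD _ _ h₂ hBD ?_).symm |>.symm
    rw [← h_rev w₁ h₁, hrev, List.reverse_reverse]
  rw [hw2]
  exact reduce_pair w₁ h₁
end

section
/- For the homomorphism h with h(A)=ABB, h(B)=BBA, h(C)=h(D)=BAB, and for all w₁ ∈ {A,C}*, w₂ ∈ {B,D}*: w₁w₂ ⇒* λ by rules AB→λ and CD→λ implies h(w₁) = h(w₂)^R. -/
open L4

/-- partner letter -/
def p : L4 → L4
  | A => B
  | B => A
  | C => D
  | D => C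

lemma key : ∀ {u : List L4}, Relation.ReflTransGen DelStep u [] →
    ∀ w₁ w₂ : List L4, u = w₁ ++ w₂ → (∀ c ∈ w₁, c = A ∨ c = C) →
    (∀ c ∈ w₂, c = B ∨ c = D) → w₂ = (w₁.map p).reverse := by
  intro u hder
  induction hder using Relation.ReflTransGen.head_induction_on with
  | refl =>
    intro w₁ w₂ hu _ _
    rcases List.append_eq_nil_iff.mp hu.symm with ⟨h1, h2⟩
    subst h1; subst h2; rfl
  | @head s t hstep _ ih =>
    intro w₁ w₂ hu hw₁ hw₂
    obtain ⟨x, y, hab, hv⟩ := hstep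
    have hcase : ∃ a b : L4, (a = A ∧ b = B ∨ a = C ∧ b = D) ∧ s = x ++ [a, b] ++ y := by
      rcases hab with h' | h'
      · exact ⟨A, B, Or.inl ⟨rfl, rfl⟩, h'⟩
      · exact ⟨C, D, Or.inr ⟨rfl, rfl⟩, h'⟩
    obtain ⟨a, b, habv, hs⟩ := hcase
    have haAC : a = A ∨ a = C := by rcases habv with ⟨h1, _⟩ | ⟨h1, _⟩ <;> simp [h1]
    have hbBD : b = B ∨ b = D := by rcases habv with ⟨_, h1⟩ | ⟨_, h1⟩ <;> simp [h1]
    have hanw₂ : a ∉ w₂ := by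
      intro hmem
      rcases hw₂ a hmem with h' | h' <;> rcases haAC with h'' | h'' <;>
        (rw [h''] at h'; exact L4.noConfusion h')
    have hbnw₁ : b ∉ w₁ := by
      intro hmem
      rcases hw₁ b hmem with h' | h' <;> rcases hbBD with h'' | h'' <;>
        (rw [h''] at h'; exact L4.noConfusion h')
    have heq : w₁ ++ w₂ = x ++ ((a :: b :: []) ++ y) := by rw [← hu, hs]; simp
    rcases List.append_eq_append_iff.mp heq with ⟨t', ht1, ht2⟩ | ⟨t', ht1, ht2⟩
    · -- x = w₁ ++ t', w₂ = t' ++ (a::b::y)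
      exact absurd (by rw [ht2]; simp : a ∈ w₂) hanw₂
    · -- w₁ = x ++ t', a::b::y = t' ++ w₂
      match t', ht1, ht2 with
      | [], ht1, ht2 =>
        have hw2 : w₂ = a :: b :: y := by simpa using ht2.symm
        exact absurd (by rw [hw2]; simp : a ∈ w₂) hanw₂
      | [a'], ht1, ht2 =>
        have ha' : a = a' ∧ b :: y = w₂ := by simpa using ht2
        obtain ⟨ha', hw2⟩ := ha'
        subst ha'
        have hy : y = (x.map p).reverse := by
          apply ih x y hv
          · intro c hc; exact hw₁ c (by rw [ht1]; simp [hc])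
          · intro c hc; exact hw₂ c (by rw [← hw2]; simp [hc])
        have hpa : p a = b := by
          rcases habv with ⟨h1, h2⟩ | ⟨h1, h2⟩ <;> subst h1 <;> subst h2 <;> rfl
        rw [← hw2, hy, ht1]
        simp [hpa]
      | a' :: b' :: t'', ht1, ht2 =>
        have hb' : b = b' := by
          have h3 := ht2
          simp only [List.cons_append, List.cons.injEq] at h3
          exact h3.2.1
        exact absurd (by rw [ht1, hb']; simp : b ∈ w₁) hbnw₁

lemma hrev (l : List L4) : h ((l.map p).reverse) = (h l).reverse := by
  induction l with
  | nil => rfl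
  | cons c t ih =>
    simp only [List.map_cons, List.reverse_cons, h, List.flatMap_append, List.flatMap_cons] at *
    rw [ih]
    cases c <;> simp [himg, p, h]

/-- If w₁ ∈ {A,C}*, w₂ ∈ {B,D}*, and w₁w₂ ⇒* λ by the rules AB→λ and CD→λ,
then h(w₁) equals the reversal of h(w₂). -/
theorem mirror_of_cancellation (w₁ w₂ : List L4)
    (h₁ : ∀ c ∈ w₁, c = A ∨ c = C) (h₂ : ∀ c ∈ w₂, c = B ∨ c = D)
    (hder : Relation.ReflTransGen DelStep (w₁ ++ w₂) []) :
    h w₁ = (h w₂).reverse := by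
  have hw2 : w₂ = (w₁.map p).reverse := key hder w₁ w₂ rfl h₁ h₂
  rw [hw2, hrev, List.reverse_reverse]
end

section
/- In Geffert normal form, every string w₁ ∈ {A,C}* and w₂ ∈ {B,D}* satisfies: w₁w₂ ⇒* λ by rules AB→λ and CD→λ if and only if w₂ is obtained from the reversal of w₁ by replacing each A with B and each C with D. -/
open L4

/-- The letterwise bijection σ with σ(A)=B, σ(C)=D (and σ(B)=A, σ(D)=C). -/
def sigma : L4 → L4
  | A => B
  | B => A
  | C => D
  | D => C

/-- Stack-based reduction step. -/
def rstep : L4 → List L4 → List L4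
  | A, B :: t => t
  | C, D :: t => t
  | c, v => c :: v

def nf (u : List L4) : List L4 := u.foldr rstep []

lemma rstep_B (v : List L4) : rstep B v = B :: v := by cases v <;> rfl
lemma rstep_D (v : List L4) : rstep D v = D :: v := by cases v <;> rfl

lemma AB_cancel (acc : List L4) : List.foldr rstep acc [A, B] = acc := by
  simp only [List.foldr_cons, List.foldr_nil]; rw [rstep_B]; rfl

lemma CD_cancel (acc : List L4) : List.foldr rstep acc [C, D] = acc := by
  simp only [List.foldr_cons, List.foldr_nil]; rw [rstep_D]; rfl

lemma delstep_nf {u v : List L4} (hd : DelStep u v) : nf u = nf v := by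
  obtain ⟨x, y, hu | hu, hv⟩ := hd <;> subst hu <;> subst hv <;>
    simp only [nf, List.append_assoc, List.foldr_append, AB_cancel, CD_cancel]

lemma rtg_nf {u v : List L4} (hd : Relation.ReflTransGen DelStep u v) : nf u = nf v := by
  induction hd with
  | refl => rfl
  | tail _ h ih => rw [ih, delstep_nf h]

lemma delstep_cons {u v : List L4} (c : L4) (hd : DelStep u v) :
    DelStep (c :: u) (c :: v) := by
  obtain ⟨x, y, hu | hu, hv⟩ := hd <;> subst hu <;> subst hv <;>
    exact ⟨c :: x, y, by simp, by simp⟩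

lemma rtg_cons {u v : List L4} (c : L4) (hd : Relation.ReflTransGen DelStep u v) :
    Relation.ReflTransGen DelStep (c :: u) (c :: v) := by
  induction hd with
  | refl => exact .refl
  | tail _ h ih => exact ih.tail (delstep_cons c h)

lemma rtg_rstep (c : L4) (v : List L4) :
    Relation.ReflTransGen DelStep (c :: v) (rstep c v) := by
  cases c <;> cases v with
  | nil => exact .refl
  | cons x t =>
    cases x <;> first
      | exact .refl
      | exact Relation.ReflTransGen.single ⟨[], t, by simp [rstep], rfl⟩

lemma to_nf (u : List L4) : Relation.ReflTransGen DelStep u (nf u) := by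
  induction u with
  | nil => exact .refl
  | cons c t ih =>
    exact (rtg_cons c ih).trans (rtg_rstep c (nf t))

lemma nf_BD {w : List L4} (hw : ∀ c ∈ w, c = B ∨ c = D) : nf w = w := by
  induction w with
  | nil => rfl
  | cons c t ih =>
    have ht := ih (fun x hx => hw x (List.mem_cons_of_mem _ hx))
    rcases hw c List.mem_cons_self with rfl | rfl <;>
      simp [nf, List.foldr_cons] at ht ⊢ <;> rw [ht] <;> simp [rstep_B, rstep_D]

lemma key_fwd : ∀ (w₁ z w₂ : List L4), (∀ c ∈ w₁, c = A ∨ c = C) →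
    (∀ c ∈ z, c = B ∨ c = D) → List.foldr rstep w₂ w₁ = z →
    w₂ = w₁.reverse.map sigma ++ z := by
  intro w₁
  induction w₁ with
  | nil => intro z w₂ _ _ hz; simpa using hz
  | cons c rest ih =>
    intro z w₂ hw hz hfold
    have hc := hw c List.mem_cons_self
    have hrest : ∀ x ∈ rest, x = A ∨ x = C := fun x hx => hw x (List.mem_cons_of_mem _ hx)
    simp only [List.foldr_cons] at hfold
    have notA : ¬ (A ∈ z) := fun hm => by rcases hz A hm with h | h <;> simp at h
    have notC : ¬ (C ∈ z) := fun hm => by rcases hz C hm with h | h <;> simp at h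
    rcases hc with rfl | rfl
    · cases hveq : List.foldr rstep w₂ rest with
      | nil =>
        rw [hveq] at hfold
        exact absurd (by rw [← hfold]; simp [rstep]) notA
      | cons x t =>
        rw [hveq] at hfold
        cases x with
        | B =>
          have ht : t = z := hfold
          subst ht
          have := ih (B :: t) w₂ hrest
            (fun x hx => by rcases List.mem_cons.mp hx with rfl | hx
                            · exact Or.inl rfl
                            · exact hz x hx)
            hveq
          simp [this, sigma]
        | A => exact absurd (by rw [← hfold]; simp [rstep]) notA
        | C => exact absurd (by rw [← hfold]; simp [rstep]) notA
        | D => exact absurd (by rw [← hfold]; simp [rstep]) notA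
    · cases hveq : List.foldr rstep w₂ rest with
      | nil =>
        rw [hveq] at hfold
        exact absurd (by rw [← hfold]; simp [rstep]) notC
      | cons x t =>
        rw [hveq] at hfold
        cases x with
        | D =>
          have ht : t = z := hfold
          subst ht
          have := ih (D :: t) w₂ hrest
            (fun x hx => by rcases List.mem_cons.mp hx with rfl | hx
                            · exact Or.inr rfl
                            · exact hz x hx)
            hveq
          simp [this, sigma]
        | A => exact absurd (by rw [← hfold]; simp [rstep]) notC
        | B => exact absurd (by rw [← hfold]; simp [rstep]) notC
        | C => exact absurd (by rw [← hfold]; simp [rstep]) notC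

lemma key_bwd : ∀ (w₁ z : List L4), (∀ c ∈ w₁, c = A ∨ c = C) →
    List.foldr rstep (w₁.reverse.map sigma ++ z) w₁ = z := by
  intro w₁
  induction w₁ with
  | nil => intro z _; rfl
  | cons c rest ih =>
    intro z hw
    have hc := hw c List.mem_cons_self
    have hrest : ∀ x ∈ rest, x = A ∨ x = C := fun x hx => hw x (List.mem_cons_of_mem _ hx)
    have harr : (c :: rest).reverse.map sigma ++ z = rest.reverse.map sigma ++ (sigma c :: z) := by
      simp
    rw [List.foldr_cons, harr, ih (sigma c :: z) hrest]
    rcases hc with rfl | rfl <;> rfl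

/-- For w₁ ∈ {A,C}* and w₂ ∈ {B,D}*: w₁w₂ ⇒* λ by the rules AB→λ and CD→λ
iff w₂ is obtained from the reversal of w₁ by replacing each A with B and each C with D. -/
theorem cancellation_iff_mirror (w₁ w₂ : List L4)
    (h₁ : ∀ c ∈ w₁, c = A ∨ c = C) (h₂ : ∀ c ∈ w₂, c = B ∨ c = D) :
    Relation.ReflTransGen DelStep (w₁ ++ w₂) [] ↔ w₂ = w₁.reverse.map sigma := by
  have hnf : nf (w₁ ++ w₂) = List.foldr rstep w₂ w₁ := by
    have := nf_BD h₂
    simp only [nf, List.foldr_append]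
    rw [show List.foldr rstep [] w₂ = w₂ from this]
  constructor
  · intro hr
    have h0 : nf (w₁ ++ w₂) = [] := rtg_nf hr
    have := key_fwd w₁ [] w₂ h₁ (by simp) (hnf ▸ h0)
    simpa using this
  · intro hw
    have : List.foldr rstep w₂ w₁ = [] := by
      rw [hw, ← List.append_nil (w₁.reverse.map sigma)] at *
      simpa using key_bwd w₁ [] h₁
    have h0 : nf (w₁ ++ w₂) = [] := by rw [hnf, this]
    exact h0 ▸ to_nf (w₁ ++ w₂)
end

section
/- Every nonerasing scattered context grammar generates a context-sensitive language. -/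
/-- Symbols of a grammar: nonterminals or terminals. -/
inductive GSym (N T : Type) where
  | nt : N → GSym N T
  | tm : T → GSym N T
  deriving DecidableEq

abbrev Str (N T : Type) := List (GSym N T)

/-- `SCMatch ps u v` : applying the scattered context production with components `ps`
(an ordered list of pairs `(Aᵢ, xᵢ)`) rewrites `u` to `v`. -/
def SCMatch {N T : Type} : List (N × Str N T) → Str N T → Str N T → Prop
  | [], u, v => u = v
  | (A, x) :: ps, u, v =>
      ∃ u₁ u' v', u = u₁ ++ GSym.nt A :: u' ∧ v = u₁ ++ x ++ v' ∧ SCMatch ps u' v'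

/-- A scattered context grammar (with a fixed set of productions, each a nonempty
list of pairs of a nonterminal and its replacement string). -/
structure SCG (N T : Type) where
  prods : List (List (N × Str N T))
  start : N
  nonempty_prods : ∀ p ∈ prods, p ≠ []

def SCG.Step {N T : Type} (g : SCG N T) (u v : Str N T) : Prop :=
  ∃ p ∈ g.prods, SCMatch p u v

def SCG.language {N T : Type} (g : SCG N T) : Set (List T) :=
  {w | Relation.ReflTransGen g.Step [GSym.nt g.start] (w.map GSym.tm)}


def SCG.Nonerasing {N T : Type} (g : SCG N T) : Prop :=
  ∀ p ∈ g.prods, ∀ q ∈ p, q.2 ≠ []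

/-- A general (phrase-structure) grammar: productions α → β with α containing
a nonterminal. -/
structure Grammar (N T : Type) where
  prods : List (Str N T × Str N T)
  start : N
  lhs_nt : ∀ p ∈ prods, ∃ A : N, GSym.nt A ∈ p.1

def Grammar.Step {N T : Type} (g : Grammar N T) (u v : Str N T) : Prop :=
  ∃ p ∈ g.prods, ∃ x y : Str N T, u = x ++ p.1 ++ y ∧ v = x ++ p.2 ++ y

def Grammar.language {N T : Type} (g : Grammar N T) : Set (List T) :=
  {w | Relation.ReflTransGen g.Step [GSym.nt g.start] (w.map GSym.tm)}

/-- A grammar is context-sensitive (monotone) if |α| ≤ |β| for every production α → β. -/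
def Grammar.ContextSensitive {N T : Type} (g : Grammar N T) : Prop :=
  ∀ p ∈ g.prods, p.1.length ≤ p.2.length

/- ============ auxiliary construction ============ -/
namespace NSCG

open Classical

variable {N T : Type} (g : SCG N T)

/-- terminals occurring in right-hand sides of productions -/
def TS : List T :=
  g.prods.flatMap fun p => p.flatMap fun q =>
    q.2.filterMap fun s => match s with | .tm a => some a | .nt _ => none

noncomputable instance fintypeTS : Fintype {a : T // a ∈ TS g} := by
  haveI := Classical.decEq T
  exact List.Subtype.fintype _

/-- basic alphabet: nonterminals plus terminals occurring in productions -/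
abbrev K : Type := N ⊕ {a : T // a ∈ TS g}

/-- max production length -/
def C : ℕ := (g.prods.map List.length).foldr max 0

abbrev Mk : Type := Fin g.prods.length × Fin (C g + 1) × K g

/-- nonterminal alphabet of the simulating grammar -/
abbrev M : Type := K g ⊕ K g ⊕ Mk g

/-- decode a basic symbol -/
def dk : K g → GSym N T
  | .inl B => .nt B
  | .inr a => .tm a.1

/-- embed a symbol of g into symbols of g' -/
def e1 : GSym N T → GSym (M g) T
  | .nt B => .nt (Sum.inl (Sum.inl B))
  | .tm a => .tm a

/-- embed a string -/
def eS (u : Str N T) : Str (M g) T := u.map (e1 g)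

/-- embed a basic symbol -/
def embK (k : K g) : GSym (M g) T := e1 g (dk g k)

/-- code a symbol of g as a basic symbol (junk on terminals outside TS) -/
noncomputable def symK (s : GSym N T) : K g :=
  match s with
  | .nt B => .inl B
  | .tm a => if h : a ∈ TS g then .inr ⟨a, h⟩ else .inl g.start

def til (k : K g) : GSym (M g) T := .nt (Sum.inr (Sum.inl k))

def mkS (pi : Fin g.prods.length) (i : Fin (C g + 1)) (k : K g) : GSym (M g) T :=
  .nt (Sum.inr (Sum.inr (pi, i, k)))

noncomputable def lastK (x : Str N T) : K g := symK g (x.getLast?.getD (.nt g.start))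

/-- string laid down by the marker after consuming a component with rhs `x` -/
noncomputable def mark (pi : Fin g.prods.length) (i : Fin (C g + 1)) (x : Str N T) :
    Str (M g) T := (x.dropLast.map (e1 g)) ++ [mkS g pi i (lastK g x)]

noncomputable def ks [Fintype N] : List (K g) := (Finset.univ : Finset (K g)).toList

lemma le_foldr_max (l : List ℕ) (a : ℕ) (h : a ∈ l) : a ≤ l.foldr max 0 := by
  induction l with
  | nil => simp at h
  | cons b l ih =>
    rcases List.mem_cons.mp h with h | h
    · simp [h]
    · exact le_max_of_le_right (ih h)

lemma length_get_le_C (pi : Fin g.prods.length) : (g.prods.get pi).length ≤ C g :=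
  le_foldr_max _ _ (List.mem_map_of_mem (g.prods.get_mem _))

variable [Fintype N]

noncomputable def prodsMoveR : List (Str (M g) T × Str (M g) T) :=
  (ks g).flatMap fun k => (ks g).map fun s =>
    ([til g k, embK g s], [embK g k, til g s])

noncomputable def prodsMoveL : List (Str (M g) T × Str (M g) T) :=
  (ks g).flatMap fun k => (ks g).map fun s =>
    ([embK g k, til g s], [til g k, embK g s])

noncomputable def prodsDissolve : List (Str (M g) T × Str (M g) T) :=
  (TS g).attach.map fun a => ([til g (.inr a)], [GSym.tm a.1])

noncomputable def prodsBirth : List (Str (M g) T × Str (M g) T) :=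
  (List.finRange g.prods.length).flatMap fun pi =>
    ((g.prods.get pi).head?.map fun q => ([til g (.inl q.1)], mark g pi 1 q.2)).toList

noncomputable def prodsPass : List (Str (M g) T × Str (M g) T) :=
  (List.finRange g.prods.length).flatMap fun pi =>
    (List.finRange (C g + 1)).flatMap fun i =>
      (ks g).flatMap fun k => (ks g).map fun s =>
        ([mkS g pi i k, embK g s], [embK g k, mkS g pi i s])

noncomputable def prodsConsume : List (Str (M g) T × Str (M g) T) :=
  (List.finRange g.prods.length).flatMap fun pi =>
    (List.finRange (C g + 1)).flatMap fun i =>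
      if h : i.val < (g.prods.get pi).length then
        (ks g).map fun k =>
          ([mkS g pi i k, e1 g (.nt ((g.prods.get pi).get ⟨i.val, h⟩).1)],
           embK g k :: mark g pi ⟨i.val + 1, by
             have := length_get_le_C g pi; omega⟩ ((g.prods.get pi).get ⟨i.val, h⟩).2)
      else []

noncomputable def prodsDeath : List (Str (M g) T × Str (M g) T) :=
  (List.finRange g.prods.length).flatMap fun pi =>
    (ks g).map fun k =>
      ([mkS g pi ⟨(g.prods.get pi).length, by have := length_get_le_C g pi; omega⟩ k],
       [til g k])

noncomputable def G : Grammar (M g) T where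
  prods := prodsMoveR g ++ prodsMoveL g ++ prodsDissolve g ++ prodsBirth g ++
    prodsPass g ++ prodsConsume g ++ prodsDeath g
  start := Sum.inr (Sum.inl (Sum.inl g.start))
  lhs_nt := by
    intro pr hpr
    simp only [List.mem_append, prodsMoveR, prodsMoveL, prodsDissolve, prodsBirth,
      prodsPass, prodsConsume, prodsDeath, List.mem_flatMap, List.mem_map,
      Option.mem_toList, Option.mem_def, Option.map_eq_some_iff] at hpr
    rcases hpr with ((((((⟨k,_,s,_,h⟩|⟨k,_,s,_,h⟩)|⟨a,_,h⟩)|⟨pi,_,q,_,h⟩)|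
      ⟨pi,_,i,_,k,_,s,_,h⟩)|⟨pi,_,i,_,h⟩)|⟨pi,_,k,_,h⟩)
    · exact h ▸ ⟨Sum.inr (Sum.inl k), by simp [til]⟩
    · exact h ▸ ⟨Sum.inr (Sum.inl s), by simp [til]⟩
    · exact h ▸ ⟨Sum.inr (Sum.inl (Sum.inr a)), by simp [til]⟩
    · exact h ▸ ⟨Sum.inr (Sum.inl (Sum.inl q.1)), by simp [til]⟩
    · exact h ▸ ⟨Sum.inr (Sum.inr (pi, i, k)), by simp [mkS]⟩
    · rcases Nat.lt_or_ge i.val (g.prods.get pi).length with hc | hc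
      · rw [dif_pos hc] at h
        rcases List.mem_map.mp h with ⟨k, _, h⟩
        exact h ▸ ⟨Sum.inr (Sum.inr (pi, i, k)), by simp [mkS]⟩
      · rw [dif_neg (Nat.not_lt.mpr hc)] at h
        simp at h
    · exact h ▸ ⟨Sum.inr (Sum.inr (pi, ⟨(g.prods.get pi).length,
        by have := length_get_le_C g pi; omega⟩, k)), by simp [mkS]⟩


/- ============ basic lemmas ============ -/

section Basic
variable {N T : Type} {g : SCG N T}

lemma scmatch_append_right {ps : List (N × Str N T)} {u v : Str N T} (h : SCMatch ps u v)
    (z : Str N T) : SCMatch ps (u ++ z) (v ++ z) := by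
  induction ps generalizing u v with
  | nil => simpa [SCMatch] using congrArg (· ++ z) h
  | cons q ps ih =>
    obtain ⟨A, x⟩ := q
    obtain ⟨u₁, u', v', hu, hv, hm⟩ := h
    exact ⟨u₁, u' ++ z, v' ++ z, by simp [hu], by simp [hv], ih hm⟩

lemma scmatch_snoc {ps : List (N × Str N T)} {u v : Str N T} (h : SCMatch ps u v)
    (A : N) (x : Str N T) :
    SCMatch (ps ++ [(A, x)]) (u ++ [GSym.nt A]) (v ++ x) := by
  induction ps generalizing u v with
  | nil =>
    cases h
    exact ⟨u, [], [], rfl, by simp, rfl⟩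
  | cons q ps ih =>
    obtain ⟨B, y⟩ := q
    obtain ⟨u₁, u', v', hu, hv, hm⟩ := h
    exact ⟨u₁, u' ++ [GSym.nt A], v' ++ x, by simp [hu], by simp [hv], ih hm⟩

lemma scmatch_length {ps : List (N × Str N T)} {u v : Str N T}
    (hne : ∀ q ∈ ps, q.2 ≠ []) (h : SCMatch ps u v) : u.length ≤ v.length := by
  induction ps generalizing u v with
  | nil => cases h; exact le_rfl
  | cons q ps ih =>
    obtain ⟨A, x⟩ := q
    obtain ⟨u₁, u', v', hu, hv, hm⟩ := h
    have hx : 1 ≤ x.length := by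
      have := hne (A, x) (List.mem_cons_self)
      cases x with
      | nil => simp at this
      | cons a l => simp
    have := ih (fun q hq => hne q (List.mem_cons_of_mem _ hq)) hm
    simp [hu, hv]; omega

/-- goodness of a symbol: terminals must come from `TS g` -/
def GoodS (g : SCG N T) (s : GSym N T) : Prop := ∀ a : T, s = GSym.tm a → a ∈ TS g

def Good (g : SCG N T) (u : Str N T) : Prop := ∀ s ∈ u, GoodS g s

lemma good_append {u v : Str N T} (hu : Good g u) (hv : Good g v) : Good g (u ++ v) := by
  intro s hs; rcases List.mem_append.mp hs with h | h; exacts [hu s h, hv s h]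

lemma good_of_append_left {u v : Str N T} (h : Good g (u ++ v)) : Good g u :=
  fun s hs => h s (List.mem_append.mpr (Or.inl hs))

lemma good_of_append_right {u v : Str N T} (h : Good g (u ++ v)) : Good g v :=
  fun s hs => h s (List.mem_append.mpr (Or.inr hs))

lemma good_rhs {p : List (N × Str N T)} (hp : p ∈ g.prods) {q : N × Str N T} (hq : q ∈ p) :
    Good g q.2 := by
  intro s hs a ha
  subst ha
  unfold TS
  rw [List.mem_flatMap]
  exact ⟨p, hp, List.mem_flatMap.mpr ⟨q, hq, List.mem_filterMap.mpr ⟨GSym.tm a, hs, rfl⟩⟩⟩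

lemma scmatch_good {ps : List (N × Str N T)} {u v : Str N T}
    (hps : ∀ q ∈ ps, Good g q.2) (h : SCMatch ps u v) (hu : Good g u) : Good g v := by
  induction ps generalizing u v with
  | nil => cases h; exact hu
  | cons q ps ih =>
    obtain ⟨A, x⟩ := q
    obtain ⟨u₁, u', v', hhu, hv, hm⟩ := h
    subst hhu hv
    have h1 := good_of_append_left hu
    have h2 : Good g u' := by
      have := good_of_append_right hu
      intro s hs; exact this s (List.mem_cons_of_mem _ hs)
    exact good_append (good_append h1 (hps (A, x) (List.mem_cons_self)))
      (ih (fun q hq => hps q (List.mem_cons_of_mem _ hq)) hm h2)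

lemma reach_good {v : Str N T}
    (h : Relation.ReflTransGen g.Step [GSym.nt g.start] v) : Good g v := by
  induction h with
  | refl => intro s hs a ha; simp at hs; simp [hs] at ha
  | tail _ hstep ih =>
    obtain ⟨p, hp, hm⟩ := hstep
    exact scmatch_good (fun q hq => good_rhs hp hq) hm ih

lemma reach_ne_nil (hg : g.Nonerasing) {v : Str N T}
    (h : Relation.ReflTransGen g.Step [GSym.nt g.start] v) : v ≠ [] := by
  induction h with
  | refl => simp
  | tail _ hstep ih =>
    obtain ⟨p, hp, hm⟩ := hstep
    have h1 := scmatch_length (fun q hq => hg p hp q hq) hm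
    intro hnil
    rename_i u _ _
    have : u ≠ [] := ih
    have : 1 ≤ u.length := List.length_pos_iff.mpr this
    rw [hnil] at h1
    simp only [List.length_nil, Nat.le_zero] at h1
    omega

end Basic

/- ============ coding lemmas ============ -/

section Coding
variable {N T : Type} {g : SCG N T}

lemma e1_injective : Function.Injective (e1 g) := by
  intro s t h
  cases s <;> cases t <;> simp [e1] at h <;> simp [h]

lemma embK_injective : Function.Injective (embK g) := by
  intro k l h
  haveI := Classical.decEq T
  cases k with
  | inl B => cases l with
    | inl C => simp [embK, dk, e1] at h; simp [h]
    | inr a => simp [embK, dk, e1] at h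
  | inr a => cases l with
    | inl C => simp [embK, dk, e1] at h
    | inr b => simp [embK, dk, e1] at h; exact Subtype.ext h ▸ rfl

lemma symK_dk (k : K g) : symK g (dk g k) = k := by
  cases k with
  | inl B => rfl
  | inr a => simp [dk, symK, a.2]

lemma dk_symK {s : GSym N T} (hs : GoodS g s) : dk g (symK g s) = s := by
  cases s with
  | nt B => rfl
  | tm a => simp [symK, hs a rfl, dk]

lemma embK_eq_e1 (k : K g) : embK g k = e1 g (dk g k) := rfl

lemma embK_symK {s : GSym N T} (hs : GoodS g s) : embK g (symK g s) = e1 g s := by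
  rw [embK_eq_e1, dk_symK hs]

/-- a "plain" symbol of the big grammar is the image of a symbol of g -/
def Plain : GSym (M g) T → Prop
  | .tm _ => True
  | .nt (Sum.inl _) => True
  | .nt (Sum.inr _) => False

lemma plain_e1 (s : GSym N T) : Plain (g := g) (e1 g s) := by
  cases s <;> simp [e1, Plain]

lemma plain_embK (k : K g) : Plain (g := g) (embK g k) := plain_e1 _

lemma plain_eS {u : Str N T} {s} (hs : s ∈ eS g u) : Plain (g := g) s := by
  obtain ⟨t, _, rfl⟩ := List.mem_map.mp hs
  exact plain_e1 t

lemma not_plain_til (k : K g) : ¬ Plain (g := g) (til g k) := by simp [til, Plain]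

lemma not_plain_mkS (pi i) (k : K g) : ¬ Plain (g := g) (mkS g pi i k) := by
  simp [mkS, Plain]

end Coding

/- ============ list surgery lemmas ============ -/

section Surgery
variable {σ : Type*} {P : σ → Prop}

lemma single_special : ∀ (l₁ : List σ) {c l₂ x c' y},
    (∀ s ∈ l₁, P s) → (∀ s ∈ l₂, P s) → ¬ P c → ¬ P c' →
    l₁ ++ c :: l₂ = x ++ c' :: y → x = l₁ ∧ c' = c ∧ y = l₂ := by
  intro l₁
  induction l₁ with
  | nil =>
    intro c l₂ x c' y _ h₂ hc hc' he
    cases x with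
    | nil => simpa using he.symm
    | cons d x' =>
      rw [List.nil_append, List.cons_append, List.cons.injEq] at he
      obtain ⟨rfl, he⟩ := he
      exact absurd (h₂ c' (he ▸ List.mem_append.mpr (Or.inr (List.mem_cons_self)))) hc'
  | cons a l₁ ih =>
    intro c l₂ x c' y h₁ h₂ hc hc' he
    cases x with
    | nil =>
      rw [List.nil_append, List.cons_append, List.cons.injEq] at he
      obtain ⟨rfl, _⟩ := he
      exact absurd (h₁ _ (List.mem_cons_self)) hc'

    | cons d x' =>
      rw [List.cons_append, List.cons_append, List.cons.injEq] at he
      obtain ⟨rfl, he⟩ := he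
      obtain ⟨h1, h2, h3⟩ := ih (fun s hs => h₁ s (List.mem_cons_of_mem _ hs)) h₂ hc hc' he
      exact ⟨by simp [h1], h2, h3⟩

lemma no_special {w x y : List σ} {c : σ} (hw : ∀ s ∈ w, P s)
    (he : w = x ++ c :: y) : P c :=
  hw c (he ▸ List.mem_append.mpr (Or.inr (List.mem_cons_self)))

lemma map_eq_snoc {α β : Type*} {f : α → β} : ∀ {l : List α} {x : List β} {b : β},
    l.map f = x ++ [b] → ∃ l' t, l = l' ++ [t] ∧ l'.map f = x ∧ f t = b := by
  intro l
  induction l with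
  | nil => intro x b h; simp at h
  | cons a l ih =>
    intro x b h
    cases x with
    | nil =>
      rw [List.nil_append, List.map_cons, List.cons.injEq] at h
      obtain ⟨h1, h2⟩ := h
      refine ⟨[], a, ?_, rfl, h1⟩
      rw [List.map_eq_nil_iff.mp h2]
      rfl
    | cons d x' =>
      rw [List.map_cons, List.cons_append, List.cons.injEq] at h
      obtain ⟨rfl, h⟩ := h
      obtain ⟨l', t, rfl, h2, h3⟩ := ih h
      exact ⟨a :: l', t, by simp, by simp [h2], h3⟩

lemma map_eq_cons {α β : Type*} {f : α → β} {l : List α} {b : β} {y : List β}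
    (h : l.map f = b :: y) : ∃ t l', l = t :: l' ∧ f t = b ∧ l'.map f = y := by
  cases l with
  | nil => simp at h
  | cons a l => simp at h; exact ⟨a, l, rfl, h.1, h.2⟩

end Surgery

/- ============ more coding lemmas ============ -/

section Coding2
variable {N T : Type} {g : SCG N T}

lemma til_inj {k k' : K g} (h : til g k = til g k') : k = k' := by
  simpa [til] using h

lemma mkS_inj {pi pi' i i' k k'} (h : mkS g pi i k = mkS g pi' i' k') :
    pi = pi' ∧ i = i' ∧ k = k' := by
  simpa [mkS, Prod.ext_iff] using h

lemma til_ne_mkS {k k'} {pi i} : til g k ≠ mkS g pi i k' := by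
  simp [til, mkS]

lemma mark_eq {x : Str N T} (hx : x ≠ []) (pi i) :
    mark g pi i x = eS g x.dropLast ++ [mkS g pi i (symK g (x.getLast hx))] := by
  unfold mark lastK eS
  rw [List.getLast?_eq_getLast hx]
  rfl

lemma dk_lastK {x : Str N T} (hx : x ≠ []) (hgood : Good g x) :
    dk g (lastK g x) = x.getLast hx := by
  unfold lastK
  rw [List.getLast?_eq_getLast hx]
  exact dk_symK (hgood _ (List.getLast_mem hx))

lemma eS_dropLast_getLast {x : Str N T} (hx : x ≠ []) :
    eS g x.dropLast ++ [e1 g (x.getLast hx)] = eS g x := by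
  unfold eS
  have := congrArg (List.map (e1 g)) (List.dropLast_append_getLast hx)
  simpa using this

lemma eS_append (u v : Str N T) : eS g (u ++ v) = eS g u ++ eS g v := List.map_append

lemma cons2 {σ : Type*} (x y : List σ) (a b : σ) :
    x ++ [a, b] ++ y = (x ++ [a]) ++ b :: y := by simp

lemma cons2' {σ : Type*} (x y : List σ) (a b : σ) :
    x ++ [a, b] ++ y = x ++ a :: b :: y := by simp

end Coding2

/- ============ membership in G g ============ -/

section Mem
variable {N T : Type} [Fintype N] {g : SCG N T}

lemma mem_ks (k : K g) : k ∈ ks g := by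
  simp [ks]

lemma prods_cases {pr} (h : pr ∈ (G g).prods) :
    (∃ k s, pr = ([til g k, embK g s], [embK g k, til g s])) ∨
    (∃ k s, pr = ([embK g k, til g s], [til g k, embK g s])) ∨
    (∃ a : {a // a ∈ TS g}, pr = ([til g (.inr a)], [GSym.tm a.1])) ∨
    (∃ pi A x r, g.prods.get pi = (A, x) :: r ∧ pr = ([til g (.inl A)], mark g pi 1 x)) ∨
    (∃ pi i k s, pr = ([mkS g pi i k, embK g s], [embK g k, mkS g pi i s])) ∨
    (∃ pi, ∃ i : Fin (C g + 1), ∃ hi : i.val < (g.prods.get pi).length, ∃ k,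
       pr = ([mkS g pi i k, e1 g (.nt ((g.prods.get pi).get ⟨i.val, hi⟩).1)],
         embK g k :: mark g pi ⟨i.val + 1, by have := length_get_le_C g pi; omega⟩
           ((g.prods.get pi).get ⟨i.val, hi⟩).2)) ∨
    (∃ pi k, pr = ([mkS g pi
        ⟨(g.prods.get pi).length, by have := length_get_le_C g pi; omega⟩ k], [til g k])) := by
  simp only [G, List.mem_append, prodsMoveR, prodsMoveL, prodsDissolve, prodsBirth,
    prodsPass, prodsConsume, prodsDeath, List.mem_flatMap, List.mem_map,
    Option.mem_toList, Option.mem_def, Option.map_eq_some_iff] at h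
  rcases h with ((((((⟨k,_,s,_,h⟩|⟨k,_,s,_,h⟩)|⟨a,_,h⟩)|⟨pi,_,q,hq,h⟩)|
    ⟨pi,_,i,_,k,_,s,_,h⟩)|⟨pi,_,i,_,h⟩)|⟨pi,_,k,_,h⟩)
  · exact Or.inl ⟨k, s, h.symm⟩
  · exact Or.inr (Or.inl ⟨k, s, h.symm⟩)
  · exact Or.inr (Or.inr (Or.inl ⟨a, h.symm⟩))
  · refine Or.inr (Or.inr (Or.inr (Or.inl ⟨pi, q.1, q.2, (g.prods.get pi).tail, ?_, h.symm⟩)))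
    cases hp : g.prods.get pi with
    | nil => rw [hp] at hq; simp at hq
    | cons q' r => rw [hp] at hq; simp at hq; simp [hq]
  · exact Or.inr (Or.inr (Or.inr (Or.inr (Or.inl ⟨pi, i, k, s, h.symm⟩))))
  · rcases Nat.lt_or_ge i.val (g.prods.get pi).length with hc | hc
    · rw [dif_pos hc] at h
      rcases List.mem_map.mp h with ⟨k, _, h⟩
      exact Or.inr (Or.inr (Or.inr (Or.inr (Or.inr (Or.inl ⟨pi, i, hc, k, h.symm⟩)))))
    · rw [dif_neg (Nat.not_lt.mpr hc)] at h
      simp at h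
  · exact Or.inr (Or.inr (Or.inr (Or.inr (Or.inr (Or.inr ⟨pi, k, h.symm⟩)))))

end Mem

/- ============ the invariant ============ -/

section Inv
variable {N T : Type} [Fintype N]

def Reach (g : SCG N T) (v : Str N T) : Prop :=
  Relation.ReflTransGen g.Step [GSym.nt g.start] v

def Inv (g : SCG N T) (u : Str (M g) T) : Prop :=
  (∃ v, Reach g v ∧ u = eS g v) ∨
  (∃ u₁ s u₂, Reach g (u₁ ++ s :: u₂) ∧ u = eS g u₁ ++ til g (symK g s) :: eS g u₂) ∨
  (∃ γ α β pi, ∃ i : Fin (C g + 1), ∃ k, Reach g (α ++ β) ∧ 1 ≤ i.val ∧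
     i.val ≤ (g.prods.get pi).length ∧
     SCMatch ((g.prods.get pi).take i.val) α (γ ++ [dk g k]) ∧
     u = eS g γ ++ mkS g pi i k :: eS g β)

end Inv

/- ============ preservation ============ -/

section Preserve
variable {N T : Type} [Fintype N] {g : SCG N T}

lemma plain_of_eS (u : Str N T) : ∀ s ∈ eS g u, Plain (g := g) s :=
  fun _ hs => plain_eS hs

lemma eS_no_special {v : Str N T} {x y : Str (M g) T} {c}
    (h : eS g v = x ++ c :: y) (hc : ¬ Plain (g := g) c) : False :=
  hc (no_special (plain_of_eS v) h)

lemma inv_preserved (hg : g.Nonerasing) {u u' : Str (M g) T}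
    (hinv : Inv g u) (hstep : (G g).Step u u') : Inv g u' := by
  obtain ⟨pr, hpr, x, y, hu, hu'⟩ := hstep
  rcases prods_cases hpr with ⟨k,s,rfl⟩|⟨k,s,rfl⟩|⟨a,rfl⟩|⟨pi,A,x₁,r,hget,rfl⟩|
    ⟨pi,i,k,s,rfl⟩|⟨pi,i,hi,k,rfl⟩|⟨pi,k,rfl⟩ <;>
    simp only at hu hu' <;>
    rcases hinv with ⟨v,hre,rfl⟩|⟨u₁,s₀,u₂,hre,hueq⟩|⟨γ,α,β,pi',i',k',hre,h1,h2,hm,hueq⟩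
  -- moveR
  · have heq : eS g v = x ++ til g k :: (embK g s :: y) := by rw [hu]; simp
    exact absurd (eS_no_special heq (not_plain_til k)) id
  · -- moveR, shape 1
    have heq : eS g u₁ ++ til g (symK g s₀) :: eS g u₂ = x ++ til g k :: (embK g s :: y) := by
      rw [← hueq, hu]; simp
    obtain ⟨hx, hc, hy⟩ := single_special (P := Plain (g := g)) _ (plain_of_eS u₁)
      (plain_of_eS u₂) (not_plain_til _) (not_plain_til _) heq
    obtain ⟨t, u₂', rfl, het, hy2⟩ := map_eq_cons hy.symm
    have hts : t = dk g s := e1_injective (het.trans (embK_eq_e1 s))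
    have hgs₀ : GoodS g s₀ :=
      reach_good hre s₀ (List.mem_append.mpr (Or.inr (List.mem_cons_self)))
    refine Or.inr (Or.inl ⟨u₁ ++ [s₀], dk g s, u₂', ?_, ?_⟩)
    · have : u₁ ++ [s₀] ++ dk g s :: u₂' = u₁ ++ s₀ :: t :: u₂' := by simp [hts]
      rw [this]; exact hre
    · subst hx hy2
      rw [hu', til_inj hc, symK_dk]
      simp [eS_append, eS, embK_symK hgs₀]
  · -- moveR, shape 2: impossible
    have heq : eS g γ ++ mkS g pi' i' k' :: eS g β = x ++ til g k :: (embK g s :: y) := by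
      rw [← hueq, hu]; simp
    obtain ⟨_, hc, _⟩ := single_special (P := Plain (g := g)) _ (plain_of_eS γ)
      (plain_of_eS β) (not_plain_mkS _ _ _) (not_plain_til _) heq
    exact absurd hc til_ne_mkS
  -- moveL
  · have heq : eS g v = (x ++ [embK g k]) ++ til g s :: y := by rw [hu, cons2]
    exact absurd (eS_no_special heq (not_plain_til s)) id
  · -- moveL, shape 1
    have heq : eS g u₁ ++ til g (symK g s₀) :: eS g u₂ = (x ++ [embK g k]) ++ til g s :: y := by
      rw [← hueq, hu, cons2]
    obtain ⟨hx, hc, hy⟩ := single_special (P := Plain (g := g)) _ (plain_of_eS u₁)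
      (plain_of_eS u₂) (not_plain_til _) (not_plain_til _) heq
    obtain ⟨u₁', t, rfl, hx2, het⟩ := map_eq_snoc (f := e1 g) hx.symm
    have htk : t = dk g k := e1_injective (het.trans (embK_eq_e1 k))
    have hgs₀ : GoodS g s₀ :=
      reach_good hre s₀ (List.mem_append.mpr (Or.inr (List.mem_cons_self)))
    refine Or.inr (Or.inl ⟨u₁', dk g k, s₀ :: u₂, ?_, ?_⟩)
    · have : u₁' ++ dk g k :: s₀ :: u₂ = (u₁' ++ [t]) ++ s₀ :: u₂ := by simp [htk]
      rw [this]; exact hre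
    · subst hx2 hy
      rw [hu', til_inj hc, symK_dk]
      simp [eS_append, eS, embK_symK hgs₀]
  · -- moveL, shape 2: impossible
    have heq : eS g γ ++ mkS g pi' i' k' :: eS g β = (x ++ [embK g k]) ++ til g s :: y := by
      rw [← hueq, hu, cons2]
    obtain ⟨_, hc, _⟩ := single_special (P := Plain (g := g)) _ (plain_of_eS γ)
      (plain_of_eS β) (not_plain_mkS _ _ _) (not_plain_til _) heq
    exact absurd hc til_ne_mkS
  -- dissolve
  · have heq : eS g v = x ++ til g (.inr a) :: y := by rw [hu]; simp
    exact absurd (eS_no_special heq (not_plain_til _)) id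
  · -- dissolve, shape 1
    have heq : eS g u₁ ++ til g (symK g s₀) :: eS g u₂ = x ++ til g (.inr a) :: y := by
      rw [← hueq, hu]; simp
    obtain ⟨hx, hc, hy⟩ := single_special (P := Plain (g := g)) _ (plain_of_eS u₁)
      (plain_of_eS u₂) (not_plain_til _) (not_plain_til _) heq
    have hs₀ : s₀ = GSym.tm a.1 := by
      have := til_inj hc
      cases s₀ with
      | nt B => simp [symK] at this
      | tm b =>
        by_cases hb : b ∈ TS g
        · simp [symK, hb] at this
          simp [this]
        · simp [symK, hb] at this
    refine Or.inl ⟨u₁ ++ s₀ :: u₂, hre, ?_⟩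
    subst hx hy
    rw [hu', hs₀]
    simp [eS_append, eS, e1]
  · -- dissolve, shape 2: impossible
    have heq : eS g γ ++ mkS g pi' i' k' :: eS g β = x ++ til g (.inr a) :: y := by
      rw [← hueq, hu]; simp
    obtain ⟨_, hc, _⟩ := single_special (P := Plain (g := g)) _ (plain_of_eS γ)
      (plain_of_eS β) (not_plain_mkS _ _ _) (not_plain_til _) heq
    exact absurd hc til_ne_mkS
  -- birth
  · have heq : eS g v = x ++ til g (.inl A) :: y := by rw [hu]; simp
    exact absurd (eS_no_special heq (not_plain_til _)) id
  · -- birth, shape 1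
    have heq : eS g u₁ ++ til g (symK g s₀) :: eS g u₂ = x ++ til g (.inl A) :: y := by
      rw [← hueq, hu]; simp
    obtain ⟨hx, hc, hy⟩ := single_special (P := Plain (g := g)) _ (plain_of_eS u₁)
      (plain_of_eS u₂) (not_plain_til _) (not_plain_til _) heq
    have hgs₀ : GoodS g s₀ :=
      reach_good hre s₀ (List.mem_append.mpr (Or.inr (List.mem_cons_self)))
    have hs₀ : s₀ = GSym.nt A := by
      have := til_inj hc
      cases s₀ with
      | nt B => simp [symK] at this; simp [this]
      | tm b =>
        have hb : b ∈ TS g := hgs₀ b rfl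
        simp [symK, hb] at this
    have hp : g.prods.get pi ∈ g.prods := g.prods.get_mem _
    have hqmem : (A, x₁) ∈ g.prods.get pi := by rw [hget]; exact List.mem_cons_self
    have hx₁ne : x₁ ≠ [] := hg _ hp _ hqmem
    have hx₁good : Good g x₁ := good_rhs hp hqmem
    have hlen : 1 ≤ (g.prods.get pi).length := by rw [hget]; simp
    have hCge : 1 ≤ C g := le_trans hlen (length_get_le_C g pi)
    have hone : ((1 : Fin (C g + 1)) : ℕ) = 1 := by
      simp [Fin.val_one']
      omega
    refine Or.inr (Or.inr ⟨u₁ ++ x₁.dropLast, u₁ ++ [GSym.nt A], u₂, pi, 1,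
      symK g (x₁.getLast hx₁ne), ?_, ?_, ?_, ?_, ?_⟩)
    · have h : u₁ ++ [GSym.nt A] ++ u₂ = u₁ ++ s₀ :: u₂ := by simp [hs₀]
      rw [h]; exact hre
    · rw [hone]
    · rw [hone]; exact hlen
    · rw [hone, hget]
      refine ⟨u₁, [], [], by simp, ?_, rfl⟩
      rw [dk_symK (hx₁good _ (List.getLast_mem hx₁ne))]
      simp [List.dropLast_append_getLast hx₁ne]
    · subst hx hy
      rw [hu', mark_eq hx₁ne]
      simp [eS_append, eS, lastK]
  · -- birth, shape 2: impossible
    have heq : eS g γ ++ mkS g pi' i' k' :: eS g β = x ++ til g (.inl A) :: y := by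
      rw [← hueq, hu]; simp
    obtain ⟨_, hc, _⟩ := single_special (P := Plain (g := g)) _ (plain_of_eS γ)
      (plain_of_eS β) (not_plain_mkS _ _ _) (not_plain_til _) heq
    exact absurd hc til_ne_mkS
  -- pass
  · have heq : eS g v = x ++ mkS g pi i k :: (embK g s :: y) := by rw [hu]; simp
    exact absurd (eS_no_special heq (not_plain_mkS _ _ _)) id
  · -- pass, shape 1: impossible
    have heq : eS g u₁ ++ til g (symK g s₀) :: eS g u₂ = x ++ mkS g pi i k :: (embK g s :: y) := by
      rw [← hueq, hu]; simp
    obtain ⟨_, hc, _⟩ := single_special (P := Plain (g := g)) _ (plain_of_eS u₁)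
      (plain_of_eS u₂) (not_plain_til _) (not_plain_mkS _ _ _) heq
    exact absurd hc.symm til_ne_mkS
  · -- pass, shape 2
    have heq : eS g γ ++ mkS g pi' i' k' :: eS g β = x ++ mkS g pi i k :: (embK g s :: y) := by
      rw [← hueq, hu]; simp
    obtain ⟨hx, hc, hy⟩ := single_special (P := Plain (g := g)) _ (plain_of_eS γ)
      (plain_of_eS β) (not_plain_mkS _ _ _) (not_plain_mkS _ _ _) heq
    obtain ⟨rfl, rfl, rfl⟩ := mkS_inj hc
    obtain ⟨t, β', rfl, het, hy2⟩ := map_eq_cons hy.symm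
    have hts : t = dk g s := e1_injective (het.trans (embK_eq_e1 s))
    refine Or.inr (Or.inr ⟨γ ++ [dk g k], α ++ [t], β', pi, i, s, ?_, h1, h2, ?_, ?_⟩)
    · have h : α ++ [t] ++ β' = α ++ t :: β' := by simp
      rw [h]; exact hre
    · rw [hts]
      have := scmatch_append_right hm [dk g s]
      simpa using this
    · subst hx hy2
      rw [hu']
      simp [eS_append, eS, embK_eq_e1, hts]
  · -- consume
    have heq : eS g v = x ++ mkS g pi i k ::
        (e1 g (.nt ((g.prods.get pi).get ⟨i.val, hi⟩).1) :: y) := by rw [hu]; simp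
    exact absurd (eS_no_special heq (not_plain_mkS _ _ _)) id
  · -- consume, shape 1: impossible
    have heq : eS g u₁ ++ til g (symK g s₀) :: eS g u₂ =
        x ++ mkS g pi i k :: (e1 g (.nt ((g.prods.get pi).get ⟨i.val, hi⟩).1) :: y) := by
      rw [← hueq, hu]; simp
    obtain ⟨_, hc, _⟩ := single_special (P := Plain (g := g)) _ (plain_of_eS u₁)
      (plain_of_eS u₂) (not_plain_til _) (not_plain_mkS _ _ _) heq
    exact absurd hc.symm til_ne_mkS
  · -- consume, shape 2
    have heq : eS g γ ++ mkS g pi' i' k' :: eS g β =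
        x ++ mkS g pi i k :: (e1 g (.nt ((g.prods.get pi).get ⟨i.val, hi⟩).1) :: y) := by
      rw [← hueq, hu]; simp
    obtain ⟨hx, hc, hy⟩ := single_special (P := Plain (g := g)) _ (plain_of_eS γ)
      (plain_of_eS β) (not_plain_mkS _ _ _) (not_plain_mkS _ _ _) heq
    obtain ⟨rfl, rfl, rfl⟩ := mkS_inj hc
    obtain ⟨t, β', rfl, het, hy2⟩ := map_eq_cons hy.symm
    have hts : t = GSym.nt ((g.prods.get pi).get ⟨i.val, hi⟩).1 := e1_injective het
    have hp : g.prods.get pi ∈ g.prods := g.prods.get_mem _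
    have hqmem : (g.prods.get pi).get ⟨i.val, hi⟩ ∈ g.prods.get pi := List.get_mem _ _
    have hx₂ne : ((g.prods.get pi).get ⟨i.val, hi⟩).2 ≠ [] := hg _ hp _ hqmem
    have hx₂good : Good g ((g.prods.get pi).get ⟨i.val, hi⟩).2 := good_rhs hp hqmem
    refine Or.inr (Or.inr ⟨γ ++ [dk g k] ++ ((g.prods.get pi).get ⟨i.val, hi⟩).2.dropLast,
      α ++ [GSym.nt ((g.prods.get pi).get ⟨i.val, hi⟩).1], β', pi,
      ⟨i.val + 1, by have := length_get_le_C g pi; omega⟩,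
      symK g (((g.prods.get pi).get ⟨i.val, hi⟩).2.getLast hx₂ne), ?_, ?_, ?_, ?_, ?_⟩)
    · have h : α ++ [GSym.nt ((g.prods.get pi).get ⟨i.val, hi⟩).1] ++ β' = α ++ t :: β' := by
        simp [hts]
      rw [h]; exact hre
    · simp
    · simpa using hi
    · have htake : (g.prods.get pi).take (i.val + 1) =
          (g.prods.get pi).take i.val ++ [(g.prods.get pi).get ⟨i.val, hi⟩] := by
        have h := List.take_concat_get (l := g.prods.get pi) (i := i.val) hi
        simpa [List.concat_eq_append, List.get_eq_getElem] using h
      simp only [htake]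
      have hsn := scmatch_snoc hm ((g.prods.get pi).get ⟨i.val, hi⟩).1
        ((g.prods.get pi).get ⟨i.val, hi⟩).2
      rw [dk_symK (hx₂good _ (List.getLast_mem hx₂ne))]
      have hrhs : γ ++ [dk g k] ++ ((g.prods.get pi).get ⟨i.val, hi⟩).2.dropLast ++
          [((g.prods.get pi).get ⟨i.val, hi⟩).2.getLast hx₂ne] =
          (γ ++ [dk g k]) ++ ((g.prods.get pi).get ⟨i.val, hi⟩).2 := by
        rw [List.append_assoc (γ ++ [dk g k]), List.dropLast_append_getLast hx₂ne]
      rw [hrhs]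
      simpa using hsn
    · subst hx hy2
      rw [hu', mark_eq hx₂ne]
      simp [eS_append, eS, lastK, embK_eq_e1]
  -- death
  · have heq : eS g v = x ++ mkS g pi
        ⟨(g.prods.get pi).length, by have := length_get_le_C g pi; omega⟩ k :: y := by
      rw [hu]; simp
    exact absurd (eS_no_special heq (not_plain_mkS _ _ _)) id
  · -- death, shape 1: impossible
    have heq : eS g u₁ ++ til g (symK g s₀) :: eS g u₂ = x ++ mkS g pi
        ⟨(g.prods.get pi).length, by have := length_get_le_C g pi; omega⟩ k :: y := by
      rw [← hueq, hu]; simp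
    obtain ⟨_, hc, _⟩ := single_special (P := Plain (g := g)) _ (plain_of_eS u₁)
      (plain_of_eS u₂) (not_plain_til _) (not_plain_mkS _ _ _) heq
    exact absurd hc.symm til_ne_mkS
  · -- death, shape 2
    have heq : eS g γ ++ mkS g pi' i' k' :: eS g β = x ++ mkS g pi
        ⟨(g.prods.get pi).length, by have := length_get_le_C g pi; omega⟩ k :: y := by
      rw [← hueq, hu]; simp
    obtain ⟨hx, hc, hy⟩ := single_special (P := Plain (g := g)) _ (plain_of_eS γ)
      (plain_of_eS β) (not_plain_mkS _ _ _) (not_plain_mkS _ _ _) heq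
    obtain ⟨rfl, hi', rfl⟩ := mkS_inj hc
    have hp : g.prods.get pi ∈ g.prods := g.prods.get_mem _
    have hmfull : SCMatch (g.prods.get pi) α (γ ++ [dk g k]) := by
      have : i'.val = (g.prods.get pi).length := by rw [← hi']
      rw [this, List.take_length] at hm
      exact hm
    refine Or.inr (Or.inl ⟨γ, dk g k, β, ?_, ?_⟩)
    · refine Relation.ReflTransGen.tail hre ⟨g.prods.get pi, hp, ?_⟩
      have := scmatch_append_right hmfull β
      simpa using this
    · subst hx hy
      rw [hu', symK_dk]
      simp [eS_append, eS]

end Preserve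

/- ============ membership (constructive direction) ============ -/

section Mem2
variable {N T : Type} [Fintype N] {g : SCG N T}

lemma moveR_mem (k s : K g) :
    ([til g k, embK g s], [embK g k, til g s]) ∈ (G g).prods := by
  have h : ([til g k, embK g s], [embK g k, til g s]) ∈ prodsMoveR g := by
    rw [prodsMoveR, List.mem_flatMap]
    exact ⟨k, mem_ks k, List.mem_map.mpr ⟨s, mem_ks s, rfl⟩⟩
  simp [G, h]

lemma moveL_mem (k s : K g) :
    ([embK g k, til g s], [til g k, embK g s]) ∈ (G g).prods := by
  have h : ([embK g k, til g s], [til g k, embK g s]) ∈ prodsMoveL g := by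
    rw [prodsMoveL, List.mem_flatMap]
    exact ⟨k, mem_ks k, List.mem_map.mpr ⟨s, mem_ks s, rfl⟩⟩
  simp [G, h]

lemma dissolve_mem (a : {a // a ∈ TS g}) :
    ([til g (.inr a)], [GSym.tm a.1]) ∈ (G g).prods := by
  have h : ([til g (.inr a)], [GSym.tm a.1]) ∈ prodsDissolve g := by
    rw [prodsDissolve, List.mem_map]
    exact ⟨a, by simp, rfl⟩
  simp [G, h]

lemma birth_mem (pi : Fin g.prods.length) {A x r} (hget : g.prods.get pi = (A, x) :: r) :
    ([til g (.inl A)], mark g pi 1 x) ∈ (G g).prods := by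
  have h : ([til g (.inl A)], mark g pi 1 x) ∈ prodsBirth g := by
    rw [prodsBirth, List.mem_flatMap]
    refine ⟨pi, by simp, ?_⟩
    rw [hget]
    simp
  simp [G, h]

lemma pass_mem (pi : Fin g.prods.length) (i : Fin (C g + 1)) (k s : K g) :
    ([mkS g pi i k, embK g s], [embK g k, mkS g pi i s]) ∈ (G g).prods := by
  have h : ([mkS g pi i k, embK g s], [embK g k, mkS g pi i s]) ∈ prodsPass g := by
    rw [prodsPass, List.mem_flatMap]
    refine ⟨pi, by simp, ?_⟩
    rw [List.mem_flatMap]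
    refine ⟨i, by simp, ?_⟩
    rw [List.mem_flatMap]
    exact ⟨k, mem_ks k, List.mem_map.mpr ⟨s, mem_ks s, rfl⟩⟩
  simp [G, h]

lemma consume_mem (pi : Fin g.prods.length) (i : Fin (C g + 1))
    (hi : i.val < (g.prods.get pi).length) (k : K g) :
    ([mkS g pi i k, e1 g (.nt ((g.prods.get pi).get ⟨i.val, hi⟩).1)],
      embK g k :: mark g pi ⟨i.val + 1, by have := length_get_le_C g pi; omega⟩
        ((g.prods.get pi).get ⟨i.val, hi⟩).2) ∈ (G g).prods := by
  have h : ([mkS g pi i k, e1 g (.nt ((g.prods.get pi).get ⟨i.val, hi⟩).1)],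
      embK g k :: mark g pi ⟨i.val + 1, by have := length_get_le_C g pi; omega⟩
        ((g.prods.get pi).get ⟨i.val, hi⟩).2) ∈ prodsConsume g := by
    rw [prodsConsume, List.mem_flatMap]
    refine ⟨pi, by simp, ?_⟩
    rw [List.mem_flatMap]
    refine ⟨i, by simp, ?_⟩
    rw [dif_pos hi]
    exact List.mem_map.mpr ⟨k, mem_ks k, rfl⟩
  exact List.mem_append.mpr (Or.inl (List.mem_append.mpr (Or.inr h)))

lemma death_mem (pi : Fin g.prods.length) (k : K g) :
    ([mkS g pi ⟨(g.prods.get pi).length,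
        by have := length_get_le_C g pi; omega⟩ k], [til g k]) ∈ (G g).prods := by
  have h : ([mkS g pi ⟨(g.prods.get pi).length,
      by have := length_get_le_C g pi; omega⟩ k], [til g k]) ∈ prodsDeath g := by
    rw [prodsDeath, List.mem_flatMap]
    exact ⟨pi, by simp, List.mem_map.mpr ⟨k, mem_ks k, rfl⟩⟩
  exact List.mem_append.mpr (Or.inr h)

end Mem2

/- ============ context-sensitivity ============ -/

section CS
variable {N T : Type} [Fintype N] {g : SCG N T}

lemma G_cs : (G g).ContextSensitive := by
  intro pr hpr
  rcases prods_cases hpr with ⟨k,s,rfl⟩|⟨k,s,rfl⟩|⟨a,rfl⟩|⟨pi,A,x₁,r,hget,rfl⟩|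
    ⟨pi,i,k,s,rfl⟩|⟨pi,i,hi,k,rfl⟩|⟨pi,k,rfl⟩ <;>
    simp [mark, List.length_append] <;> omega

end CS

/- ============ soundness ============ -/

section Sound
variable {N T : Type} [Fintype N] {g : SCG N T}

lemma eS_eq_map_tm : ∀ {v : Str N T} {w : List T},
    eS g v = w.map GSym.tm → v = w.map GSym.tm := by
  intro v
  induction v with
  | nil => intro w h; cases w <;> simp_all [eS]
  | cons s v ih =>
    intro w h
    cases w with
    | nil => simp [eS] at h
    | cons a w =>
      simp only [eS, List.map_cons, List.cons.injEq] at h ⊢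
      cases s with
      | nt B => simp [e1] at h
      | tm b =>
        obtain ⟨h1, h2⟩ := h
        simp [e1] at h1
        exact ⟨by simp [h1], ih h2⟩

lemma sound (hg : g.Nonerasing) : (G g).language ⊆ g.language := by
  intro w hw
  have hinv : Inv g (w.map GSym.tm) := by
    have hstart : Inv g [GSym.nt (G g).start] :=
      Or.inr (Or.inl ⟨[], GSym.nt g.start, [], Relation.ReflTransGen.refl, rfl⟩)
    clear hstart
    have : ∀ u, Relation.ReflTransGen (G g).Step [GSym.nt (G g).start] u → Inv g u := by
      intro u h
      induction h with
      | refl => exact Or.inr (Or.inl ⟨[], GSym.nt g.start, [], Relation.ReflTransGen.refl, rfl⟩)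
      | tail _ hstep ih => exact inv_preserved hg ih hstep
    exact this _ hw
  rcases hinv with ⟨v,hre,hv⟩|⟨u₁,s,u₂,_,hv⟩|⟨γ,α,β,pi,i,k,_,_,_,_,hv⟩
  · have h2 := eS_eq_map_tm hv.symm
    rw [h2] at hre
    exact hre
  · exfalso
    have : til g (symK g s) ∈ List.map (GSym.tm (N := M g)) w := by
      rw [hv]
      exact List.mem_append.mpr (Or.inr (List.mem_cons_self))
    obtain ⟨a, _, ha⟩ := List.mem_map.mp this
    simp [til] at ha
  · exfalso
    have : mkS g pi i k ∈ List.map (GSym.tm (N := M g)) w := by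
      rw [hv]
      exact List.mem_append.mpr (Or.inr (List.mem_cons_self))
    obtain ⟨a, _, ha⟩ := List.mem_map.mp this
    simp [mkS] at ha

end Sound

/- ============ completeness ============ -/

section Complete
variable {N T : Type} [Fintype N] {g : SCG N T}

noncomputable def tilify (g : SCG N T) (u₁ : Str N T) (s : GSym N T) (u₂ : Str N T) :
    Str (M g) T :=
  eS g u₁ ++ til g (symK g s) :: eS g u₂

lemma stepR (u₁ : Str N T) (s t : GSym N T) (u₂ : Str N T)
    (hs : GoodS g s) (ht : GoodS g t) :
    (G g).Step (tilify g u₁ s (t :: u₂)) (tilify g (u₁ ++ [s]) t u₂) := by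
  refine ⟨_, moveR_mem (symK g s) (symK g t), eS g u₁, eS g u₂, ?_, ?_⟩
  · simp [tilify, eS, embK_symK ht]
  · simp [tilify, eS_append, eS, embK_symK hs]

lemma stepL (u₁ : Str N T) (s t : GSym N T) (u₂ : Str N T)
    (hs : GoodS g s) (ht : GoodS g t) :
    (G g).Step (tilify g (u₁ ++ [s]) t u₂) (tilify g u₁ s (t :: u₂)) := by
  refine ⟨_, moveL_mem (symK g s) (symK g t), eS g u₁, eS g u₂, ?_, ?_⟩
  · simp [tilify, eS_append, eS, embK_symK hs]
  · simp [tilify, eS, embK_symK ht]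

lemma transportR : ∀ (d : ℕ) (u₁ : Str N T) (s : GSym N T) (u₂ u₁' : Str N T)
    (s' : GSym N T) (u₂' : Str N T), Good g (u₁ ++ s :: u₂) →
    u₁ ++ s :: u₂ = u₁' ++ s' :: u₂' → u₁'.length = u₁.length + d →
    Relation.ReflTransGen (G g).Step (tilify g u₁ s u₂) (tilify g u₁' s' u₂') := by
  intro d
  induction d with
  | zero =>
    intro u₁ s u₂ u₁' s' u₂' _ heq hlen
    obtain ⟨rfl, h2⟩ := List.append_inj heq (by omega)
    obtain ⟨rfl, rfl⟩ := List.cons.injEq .. ▸ h2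
    exact Relation.ReflTransGen.refl
  | succ d ih =>
    intro u₁ s u₂ u₁' s' u₂' hgood heq hlen
    have hlen2 := congrArg List.length heq
    simp at hlen2
    cases u₂ with
    | nil => simp at hlen2; omega
    | cons t u₂'' =>
      have hs : GoodS g s := hgood s (by simp)
      have ht : GoodS g t := hgood t (by simp)
      refine Relation.ReflTransGen.head (stepR u₁ s t u₂'' hs ht) ?_
      refine ih (u₁ ++ [s]) t u₂'' u₁' s' u₂' (by simpa using hgood) (by simpa using heq)
        (by simp; omega)

lemma transportL : ∀ (d : ℕ) (u₁ : Str N T) (s : GSym N T) (u₂ u₁' : Str N T)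
    (s' : GSym N T) (u₂' : Str N T), Good g (u₁ ++ s :: u₂) →
    u₁ ++ s :: u₂ = u₁' ++ s' :: u₂' → u₁.length = u₁'.length + d →
    Relation.ReflTransGen (G g).Step (tilify g u₁ s u₂) (tilify g u₁' s' u₂') := by
  intro d
  induction d with
  | zero =>
    intro u₁ s u₂ u₁' s' u₂' _ heq hlen
    obtain ⟨rfl, h2⟩ := List.append_inj heq (by omega)
    obtain ⟨rfl, rfl⟩ := List.cons.injEq .. ▸ h2
    exact Relation.ReflTransGen.refl
  | succ d ih =>
    intro u₁ s u₂ u₁' s' u₂' hgood heq hlen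
    rcases List.eq_nil_or_concat u₁ with rfl | ⟨c, r, rfl⟩
    · simp at hlen
    · simp only [List.concat_eq_append] at hgood heq hlen ⊢
      have hr : GoodS g r := hgood r (by simp)
      have hs : GoodS g s := hgood s (by simp)
      refine Relation.ReflTransGen.head (stepL c r s u₂ hr hs) ?_
      refine ih c r (s :: u₂) u₁' s' u₂' (by simpa using hgood) (by simpa using heq)
        (by simp at hlen ⊢; omega)

lemma transport {u₁ : Str N T} {s : GSym N T} {u₂ u₁' : Str N T} {s' : GSym N T}
    {u₂' : Str N T} (hgood : Good g (u₁ ++ s :: u₂))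
    (heq : u₁ ++ s :: u₂ = u₁' ++ s' :: u₂') :
    Relation.ReflTransGen (G g).Step (tilify g u₁ s u₂) (tilify g u₁' s' u₂') := by
  rcases le_or_gt u₁.length u₁'.length with h | h
  · obtain ⟨d, hd⟩ := Nat.exists_eq_add_of_le h
    exact transportR d u₁ s u₂ u₁' s' u₂' hgood heq hd
  · obtain ⟨d, hd⟩ := Nat.exists_eq_add_of_le h.le
    exact transportL d u₁ s u₂ u₁' s' u₂' hgood heq (by omega)

lemma pass_star (pi : Fin g.prods.length) (i : Fin (C g + 1)) :
    ∀ (r₁ γ rest' : Str N T) (k : K g), Good g r₁ →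
    ∃ γ₂ k₂, γ₂ ++ [dk g k₂] = γ ++ dk g k :: r₁ ∧
      Relation.ReflTransGen (G g).Step
        (eS g γ ++ mkS g pi i k :: eS g (r₁ ++ rest'))
        (eS g γ₂ ++ mkS g pi i k₂ :: eS g rest') := by
  intro r₁
  induction r₁ with
  | nil =>
    intro γ rest' k _
    exact ⟨γ, k, by simp, Relation.ReflTransGen.refl⟩
  | cons t r₁' ih =>
    intro γ rest' k hgood
    have ht : GoodS g t := hgood t (by simp)
    have hstep : (G g).Step (eS g γ ++ mkS g pi i k :: eS g ((t :: r₁') ++ rest'))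
        (eS g (γ ++ [dk g k]) ++ mkS g pi i (symK g t) :: eS g (r₁' ++ rest')) := by
      refine ⟨_, pass_mem pi i k (symK g t), eS g γ, eS g (r₁' ++ rest'), ?_, ?_⟩
      · simp [eS, embK_symK ht]
      · simp [eS_append, eS, embK_eq_e1]
    obtain ⟨γ₂, k₂, heq, hrt⟩ := ih (γ ++ [dk g k]) rest' (symK g t)
      (fun a ha => hgood a (List.mem_cons_of_mem _ ha))
    refine ⟨γ₂, k₂, ?_, Relation.ReflTransGen.head hstep hrt⟩
    rw [heq, dk_symK ht]
    simp

lemma march (hg : g.Nonerasing) (pi : Fin g.prods.length) :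
    ∀ (ps : List (N × Str N T)) (i : ℕ) (hdrop : (g.prods.get pi).drop i = ps)
      (hi1 : 1 ≤ i) (hile : i ≤ (g.prods.get pi).length)
      (γ rest out : Str N T) (k : K g),
      SCMatch ps rest out → Good g rest →
      ∃ γ' k' rest', γ' ++ dk g k' :: rest' = γ ++ dk g k :: out ∧
        Relation.ReflTransGen (G g).Step
          (eS g γ ++ mkS g pi ⟨i, by have := length_get_le_C g pi; omega⟩ k :: eS g rest)
          (tilify g γ' (dk g k') rest') := by
  intro ps
  induction ps with
  | nil =>
    intro i hdrop hi1 hile γ rest out k hm _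
    have hout : rest = out := hm
    subst hout
    have hilen : i = (g.prods.get pi).length := by
      have := List.drop_eq_nil_iff.mp hdrop
      omega
    subst hilen
    refine ⟨γ, k, rest, rfl, Relation.ReflTransGen.single ?_⟩
    refine ⟨_, death_mem pi k, eS g γ, eS g rest, by simp, ?_⟩
    simp [tilify, symK_dk]
  | cons q ps' ih =>
    obtain ⟨A, x₂⟩ := q
    intro i hdrop hi1 hile γ rest out k hm hgood
    have hlen : i < (g.prods.get pi).length := by
      rcases Nat.lt_or_ge i (g.prods.get pi).length with h | h
      · exact h
      · rw [List.drop_eq_nil_of_le h] at hdrop; simp at hdrop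
    rw [List.drop_eq_getElem_cons hlen] at hdrop
    obtain ⟨hget, hdrop'⟩ := List.cons.injEq .. ▸ hdrop
    obtain ⟨r₁, r', o', rfl, rfl, hm'⟩ := hm
    have hqmem : (A, x₂) ∈ g.prods.get pi := by
      rw [← hget]
      exact List.getElem_mem _
    have hx₂ne : x₂ ≠ [] := hg _ (g.prods.get_mem _) _ hqmem
    have hx₂good : Good g x₂ := good_rhs (g.prods.get_mem _) hqmem
    have hgl : GoodS g (x₂.getLast hx₂ne) := hx₂good _ (List.getLast_mem hx₂ne)
    -- phase a: pass over r₁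
    obtain ⟨γ₂, k₂, heq2, hrt2⟩ := pass_star pi ⟨i, by have := length_get_le_C g pi; omega⟩
      r₁ γ (GSym.nt A :: r') k (good_of_append_left hgood)
    -- phase b: consume
    have hstepb : (G g).Step (eS g γ₂ ++ mkS g pi ⟨i, by
          have := length_get_le_C g pi; omega⟩ k₂ :: eS g (GSym.nt A :: r'))
        (eS g (γ₂ ++ dk g k₂ :: x₂.dropLast) ++
          mkS g pi ⟨i + 1, by have := length_get_le_C g pi; omega⟩
            (symK g (x₂.getLast hx₂ne)) :: eS g r') := by
      refine ⟨_, consume_mem pi ⟨i, by have := length_get_le_C g pi; omega⟩ hlen k₂,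
        eS g γ₂, eS g r', ?_, ?_⟩
      · have hA : ((g.prods.get pi).get ⟨i, hlen⟩).1 = A := by
          simp only [List.get_eq_getElem] at hget ⊢
          rw [hget]
        rw [hA]
        simp [eS]
      · have hx : ((g.prods.get pi).get ⟨i, hlen⟩).2 = x₂ := by
          simp only [List.get_eq_getElem] at hget ⊢
          rw [hget]
        rw [hx, mark_eq hx₂ne]
        simp [eS_append, eS, embK_eq_e1, lastK]
    -- phase c: induction
    have hgoodr' : Good g r' := by
      have := good_of_append_right hgood
      intro a ha
      exact this a (List.mem_cons_of_mem _ ha)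
    obtain ⟨γ', k', rest', heq3, hrt3⟩ := ih (i + 1) hdrop' (by omega) (by omega)
      (γ₂ ++ dk g k₂ :: x₂.dropLast) r' o' (symK g (x₂.getLast hx₂ne)) hm' hgoodr'
    refine ⟨γ', k', rest', ?_, ?_⟩
    · rw [heq3, dk_symK hgl]
      have : γ₂ ++ dk g k₂ :: x₂.dropLast ++ x₂.getLast hx₂ne :: o' =
          (γ₂ ++ [dk g k₂]) ++ (x₂.dropLast ++ [x₂.getLast hx₂ne]) ++ o' := by simp
      rw [this, heq2, List.dropLast_append_getLast hx₂ne]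
      simp
    · exact Relation.ReflTransGen.trans hrt2
        (Relation.ReflTransGen.head hstepb hrt3)

lemma sim_step (hg : g.Nonerasing) {v v' : Str N T} (hgood : Good g v)
    (hstep : g.Step v v') (u₁ : Str N T) (s : GSym N T) (u₂ : Str N T)
    (hsplit : u₁ ++ s :: u₂ = v) :
    ∃ w₁ t w₂, w₁ ++ t :: w₂ = v' ∧
      Relation.ReflTransGen (G g).Step (tilify g u₁ s u₂) (tilify g w₁ t w₂) := by
  obtain ⟨p, hp, hm⟩ := hstep
  obtain ⟨pi, hpi⟩ := List.get_of_mem hp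
  have hpne : p ≠ [] := g.nonempty_prods p hp
  cases hpget : p with
  | nil => exact absurd hpget hpne
  | cons q ps =>
    obtain ⟨A, x₁⟩ := q
    rw [hpget] at hm
    obtain ⟨c₁, r, o', rfl, rfl, hm'⟩ := hm
    have hx₁mem : (A, x₁) ∈ p := by rw [hpget]; exact List.mem_cons_self
    have hx₁ne : x₁ ≠ [] := hg _ hp _ hx₁mem
    have hx₁good : Good g x₁ := good_rhs hp hx₁mem
    have hget' : g.prods.get pi = (A, x₁) :: ps := by rw [hpi, hpget]
    have hlenp : 1 ≤ (g.prods.get pi).length := by rw [hget']; simp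
    have hCge : 1 ≤ C g := le_trans hlenp (length_get_le_C g pi)
    have hone : ((1 : Fin (C g + 1)) : ℕ) = 1 := by
      simp [Fin.val_one']
      omega
    -- transport token to the position of A
    have htr : Relation.ReflTransGen (G g).Step (tilify g u₁ s u₂)
        (tilify g c₁ (GSym.nt A) r) := transport (hsplit ▸ hgood) hsplit
    -- birth
    have hgl : GoodS g (x₁.getLast hx₁ne) := hx₁good _ (List.getLast_mem hx₁ne)
    have hbirth : (G g).Step (tilify g c₁ (GSym.nt A) r)
        (eS g (c₁ ++ x₁.dropLast) ++
          mkS g pi 1 (symK g (x₁.getLast hx₁ne)) :: eS g r) := by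
      refine ⟨_, birth_mem pi hget', eS g c₁, eS g r, ?_, ?_⟩
      · simp [tilify, symK]
      · rw [mark_eq hx₁ne]
        simp [eS_append, eS, lastK]
    -- march
    have hdrop1 : (g.prods.get pi).drop 1 = ps := by rw [hget']; simp
    have hgoodv : Good g (c₁ ++ GSym.nt A :: r) := hsplit ▸ hgood
    have hgoodr : Good g r := fun a ha =>
      hgoodv a (List.mem_append.mpr (Or.inr (List.mem_cons_of_mem _ ha)))
    obtain ⟨γ', k', rest', heq, hrt⟩ := march hg pi ps 1 hdrop1 le_rfl hlenp
      (c₁ ++ x₁.dropLast) r o' (symK g (x₁.getLast hx₁ne)) hm' hgoodr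
    refine ⟨γ', dk g k', rest', ?_, ?_⟩
    · rw [heq, dk_symK hgl]
      have h5 : c₁ ++ x₁.dropLast ++ x₁.getLast hx₁ne :: o' =
          c₁ ++ (x₁.dropLast ++ [x₁.getLast hx₁ne]) ++ o' := by simp
      rw [h5, List.dropLast_append_getLast hx₁ne]
    · refine Relation.ReflTransGen.trans htr (Relation.ReflTransGen.head hbirth ?_)
      have hfin : mkS g pi 1 (symK g (x₁.getLast hx₁ne)) =
          mkS g pi ⟨1, by omega⟩ (symK g (x₁.getLast hx₁ne)) := by
        congr 1
        exact Fin.ext hone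
      rw [hfin]
      exact hrt

lemma eS_map_tm (w : List T) : eS g (w.map GSym.tm) = w.map GSym.tm := by
  unfold eS
  rw [List.map_map]
  exact List.map_congr_left (fun a _ => rfl)

lemma complete (hg : g.Nonerasing) : g.language ⊆ (G g).language := by
  intro w hw
  have main : ∀ v, Relation.ReflTransGen g.Step [GSym.nt g.start] v →
      ∃ u₁ s u₂, u₁ ++ s :: u₂ = v ∧
        Relation.ReflTransGen (G g).Step [GSym.nt (G g).start] (tilify g u₁ s u₂) := by
    intro v h
    induction h with
    | refl =>
      refine ⟨[], GSym.nt g.start, [], rfl, ?_⟩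
      have : tilify g [] (GSym.nt g.start) [] = [GSym.nt (G g).start] := by
        simp [tilify, til, symK, eS, G]
      rw [this]
    | @tail b c hb hstep ih =>
      obtain ⟨u₁, s, u₂, hsplit, hrt⟩ := ih
      obtain ⟨w₁, t, w₂, hsplit', hrt'⟩ :=
        sim_step hg (reach_good hb) hstep u₁ s u₂ hsplit
      exact ⟨w₁, t, w₂, hsplit', Relation.ReflTransGen.trans hrt hrt'⟩
  obtain ⟨u₁, s, u₂, hsplit, hrt⟩ := main _ hw
  -- the token sits on some terminal of w; dissolve it
  have hsmem : s ∈ List.map GSym.tm w := by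
    rw [← hsplit] at *
    exact List.mem_append.mpr (Or.inr (List.mem_cons_self))
  obtain ⟨a, haw, rfl⟩ := List.mem_map.mp hsmem
  have hgs : GoodS g (GSym.tm a) := reach_good hw _ hsmem
  have ha : a ∈ TS g := hgs a rfl
  have hdiss : (G g).Step (tilify g u₁ (GSym.tm a) u₂) (List.map GSym.tm w) := by
    refine ⟨_, dissolve_mem ⟨a, ha⟩, eS g u₁, eS g u₂, ?_, ?_⟩
    · simp [tilify, symK, ha]
    · rw [← eS_map_tm (g := g) w, ← hsplit]
      simp [eS_append, eS, e1]
  exact Relation.ReflTransGen.tail hrt hdiss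

end Complete

end NSCG

/-- Every nonerasing scattered context grammar generates a context-sensitive language. -/
theorem nonerasing_scg_context_sensitive {N T : Type} [Fintype N]
    (g : SCG N T) (hg : g.Nonerasing) :
    ∃ (M : Type) (_ : Fintype M) (g' : Grammar M T),
      g'.ContextSensitive ∧ g'.language = g.language := by
  classical
  exact ⟨NSCG.M g, inferInstance, NSCG.G g, NSCG.G_cs,
    Set.Subset.antisymm (NSCG.sound hg) (NSCG.complete hg)⟩
end
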